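/- Let V, E be finite index sets, H̄₂ : ℝ^V → ℝ^V and H₁ : ℝ^E → ℝ^E symmetric linear maps, T : ℝ^E × ℝ^E → ℝ^V a bilinear map with adjoints T₁*, T₂* : ℝ^V × ℝ^E → ℝ^E defined by xᵀ T(a, b) = aᵀ T₁*(x, b) = bᵀ T₂*(x, a) for all x ∈ ℝ^V and a, b ∈ ℝ^E. Fix R ∈ ℝ^E, h̃ₛ ∈ ℝ^V, g ∈ ℝ, and define the discrete shallow-water Hamiltonian H : ℝ^E × ℝ^V → ℝ by H(v, h̃) := (g/2) h̃ᵀ H̄₂ h̃ + g h̃ᵀ H̄₂ h̃ₛ + ½ (H̄₂ h̃)ᵀ T(u, H₁ u) with u := v − R. Then H is differentiable, and its derivative at (v, h̃) in direction (δv, δh̃) equals δvᵀ F + δh̃ᵀ B, where the functional derivatives are F := ½ T₁*(h⁰, H₁ u) + ½ H₁ T₂*(h⁰, u) (the mass flux) and B := g H̄₂ (h̃ + h̃ₛ) + ½ H̄₂ T(u, H₁ u) (the Bernoulli function), with h⁰ := H̄₂ h̃. -/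

import Mathlib

open Matrix

/-- The continuous linear functional `(δv, δh̃) ↦ δv ⬝ᵥ F + δh̃ ⬝ᵥ B`. -/
noncomputable def dotPairCLM {E V : Type*} [Fintype E] [Fintype V]
    (F : E → ℝ) (B : V → ℝ) : ((E → ℝ) × (V → ℝ)) →L[ℝ] ℝ :=
  LinearMap.toContinuousLinearMap
    { toFun := fun p => p.1 ⬝ᵥ F + p.2 ⬝ᵥ B
      map_add' := by
        intro p q
        simp [add_dotProduct]
        ring
      map_smul' := by
        intro c p
        simp [smul_dotProduct, smul_eq_mul]
        ring }

/-- Functional derivatives of the discrete shallow-water Hamiltonian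
`H(v, h̃) = (g/2) h̃ᵀH̄₂h̃ + g h̃ᵀH̄₂h̃ₛ + ½ (H̄₂h̃)ᵀ T(u, H₁u)`, `u = v − R`:
`H` is differentiable and its derivative at `(v, h̃)` in direction `(δv, δh̃)`
is `δvᵀ F + δh̃ᵀ B`, where `F = ½ T₁*(h⁰, H₁u) + ½ H₁ T₂*(h⁰, u)` (mass flux)
and `B = g H̄₂(h̃ + h̃ₛ) + ½ H̄₂ T(u, H₁u)` (Bernoulli function), `h⁰ = H̄₂ h̃`. -/
noncomputable def bilinCLM {X Y Z : Type*}
    [NormedAddCommGroup X] [NormedSpace ℝ X] [FiniteDimensional ℝ X]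
    [NormedAddCommGroup Y] [NormedSpace ℝ Y] [FiniteDimensional ℝ Y]
    [NormedAddCommGroup Z] [NormedSpace ℝ Z]
    (B : X →ₗ[ℝ] Y →ₗ[ℝ] Z) : X →L[ℝ] Y →L[ℝ] Z :=
  LinearMap.toContinuousLinearMap
    ((LinearMap.toContinuousLinearMap :
        (Y →ₗ[ℝ] Z) ≃ₗ[ℝ] (Y →L[ℝ] Z)).toLinearMap ∘ₗ B)

@[simp] lemma bilinCLM_apply {X Y Z : Type*}
    [NormedAddCommGroup X] [NormedSpace ℝ X] [FiniteDimensional ℝ X]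
    [NormedAddCommGroup Y] [NormedSpace ℝ Y] [FiniteDimensional ℝ Y]
    [NormedAddCommGroup Z] [NormedSpace ℝ Z]
    (B : X →ₗ[ℝ] Y →ₗ[ℝ] Z) (x : X) (y : Y) : bilinCLM B x y = B x y := by
  simp [bilinCLM]

noncomputable def dotLM (α : Type*) [Fintype α] :
    (α → ℝ) →ₗ[ℝ] (α → ℝ) →ₗ[ℝ] ℝ :=
  LinearMap.mk₂ ℝ (· ⬝ᵥ ·) add_dotProduct smul_dotProduct
    dotProduct_add dotProduct_smul

noncomputable def dotCLM (α : Type*) [Fintype α] :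
    (α → ℝ) →L[ℝ] (α → ℝ) →L[ℝ] ℝ := bilinCLM (dotLM α)

@[simp] lemma dotCLM_apply {α : Type*} [Fintype α] (x y : α → ℝ) :
    dotCLM α x y = x ⬝ᵥ y := by simp [dotCLM, dotLM]

lemma dot_mulVec_symm {α : Type*} [Fintype α] (M : Matrix α α ℝ) (hM : Mᵀ = M)
    (x y : α → ℝ) : x ⬝ᵥ (M *ᵥ y) = y ⬝ᵥ (M *ᵥ x) := by
  rw [Matrix.dotProduct_mulVec, ← Matrix.mulVec_transpose, hM, dotProduct_comm]


/-- main -/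
theorem discrete_hamiltonian_functional_derivatives
    {V E : Type*} [Fintype V] [Fintype E]
    (Hb₂ : Matrix V V ℝ) (H₁ : Matrix E E ℝ)
    (hHb₂ : Hb₂ᵀ = Hb₂) (hH₁ : H₁ᵀ = H₁)
    (T : (E → ℝ) →ₗ[ℝ] (E → ℝ) →ₗ[ℝ] (V → ℝ))
    (T₁s T₂s : (V → ℝ) →ₗ[ℝ] (E → ℝ) →ₗ[ℝ] (E → ℝ))
    (hT₁ : ∀ (x : V → ℝ) (a b : E → ℝ), x ⬝ᵥ T a b = a ⬝ᵥ T₁s x b)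
    (hT₂ : ∀ (x : V → ℝ) (a b : E → ℝ), x ⬝ᵥ T a b = b ⬝ᵥ T₂s x a)
    (R : E → ℝ) (hts : V → ℝ) (g : ℝ) :
    ∀ (v : E → ℝ) (ht : V → ℝ),
      HasFDerivAt
        (fun p : (E → ℝ) × (V → ℝ) =>
          (g / 2) * (p.2 ⬝ᵥ (Hb₂ *ᵥ p.2)) + g * (p.2 ⬝ᵥ (Hb₂ *ᵥ hts))
            + (1 / 2) * ((Hb₂ *ᵥ p.2) ⬝ᵥ T (p.1 - R) (H₁ *ᵥ (p.1 - R))))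
        (dotPairCLM
          ((1 / 2 : ℝ) • T₁s (Hb₂ *ᵥ ht) (H₁ *ᵥ (v - R))
            + (1 / 2 : ℝ) • (H₁ *ᵥ T₂s (Hb₂ *ᵥ ht) (v - R)))
          (g • (Hb₂ *ᵥ (ht + hts))
            + (1 / 2 : ℝ) • (Hb₂ *ᵥ T (v - R) (H₁ *ᵥ (v - R)))))
        (v, ht) := by
  intro v ht
  classical
  let MV : (V → ℝ) →L[ℝ] (V → ℝ) := LinearMap.toContinuousLinearMap Hb₂.mulVecLin
  let ME : (E → ℝ) →L[ℝ] (E → ℝ) := LinearMap.toContinuousLinearMap H₁.mulVecLin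
  have hfst : HasFDerivAt (fun p : (E → ℝ) × (V → ℝ) => p.1)
      (ContinuousLinearMap.fst ℝ (E → ℝ) (V → ℝ)) (v, ht) := hasFDerivAt_fst
  have hsnd : HasFDerivAt (fun p : (E → ℝ) × (V → ℝ) => p.2)
      (ContinuousLinearMap.snd ℝ (E → ℝ) (V → ℝ)) (v, ht) := hasFDerivAt_snd
  have hu : HasFDerivAt (fun p : (E → ℝ) × (V → ℝ) => p.1 - R)
      (ContinuousLinearMap.fst ℝ (E → ℝ) (V → ℝ)) (v, ht) := hfst.sub_const R
  have hHb : HasFDerivAt (fun p : (E → ℝ) × (V → ℝ) => Hb₂ *ᵥ p.2)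
      (MV.comp (ContinuousLinearMap.snd ℝ (E → ℝ) (V → ℝ))) (v, ht) :=
    (MV.hasFDerivAt).comp _ hsnd
  have hH1u : HasFDerivAt (fun p : (E → ℝ) × (V → ℝ) => H₁ *ᵥ (p.1 - R))
      (ME.comp (ContinuousLinearMap.fst ℝ (E → ℝ) (V → ℝ))) (v, ht) :=
    (ME.hasFDerivAt).comp _ hu
  have hTc : HasFDerivAt (fun p : (E → ℝ) × (V → ℝ) => bilinCLM T (p.1 - R))
      ((bilinCLM T).comp (ContinuousLinearMap.fst ℝ (E → ℝ) (V → ℝ))) (v, ht) :=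
    ((bilinCLM T).hasFDerivAt).comp _ hu
  have hTu : HasFDerivAt
      (fun p : (E → ℝ) × (V → ℝ) => T (p.1 - R) (H₁ *ᵥ (p.1 - R)))
      ((bilinCLM T (v - R)).comp (ME.comp (ContinuousLinearMap.fst ℝ (E → ℝ) (V → ℝ)))
        + ((bilinCLM T).comp (ContinuousLinearMap.fst ℝ (E → ℝ) (V → ℝ))).flip
            (H₁ *ᵥ (v - R))) (v, ht) := hTc.clm_apply hH1u
  -- term A
  have hdc2 : HasFDerivAt (fun p : (E → ℝ) × (V → ℝ) => dotCLM V p.2)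
      ((dotCLM V).comp (ContinuousLinearMap.snd ℝ (E → ℝ) (V → ℝ))) (v, ht) :=
    ((dotCLM V).hasFDerivAt).comp _ hsnd
  have hA : HasFDerivAt (fun p : (E → ℝ) × (V → ℝ) => p.2 ⬝ᵥ (Hb₂ *ᵥ p.2))
      ((dotCLM V ht).comp (MV.comp (ContinuousLinearMap.snd ℝ (E → ℝ) (V → ℝ)))
        + ((dotCLM V).comp (ContinuousLinearMap.snd ℝ (E → ℝ) (V → ℝ))).flip
            (Hb₂ *ᵥ ht)) (v, ht) := hdc2.clm_apply hHb
  -- term B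
  have hB : HasFDerivAt (fun p : (E → ℝ) × (V → ℝ) => p.2 ⬝ᵥ (Hb₂ *ᵥ hts))
      (((dotCLM V).flip (Hb₂ *ᵥ hts)).comp (ContinuousLinearMap.snd ℝ (E → ℝ) (V → ℝ)))
      (v, ht) :=
    (((dotCLM V).flip (Hb₂ *ᵥ hts)).comp
      (ContinuousLinearMap.snd ℝ (E → ℝ) (V → ℝ))).hasFDerivAt
  -- term C
  have hdc3 : HasFDerivAt (fun p : (E → ℝ) × (V → ℝ) => dotCLM V (Hb₂ *ᵥ p.2))
      ((dotCLM V).comp (MV.comp (ContinuousLinearMap.snd ℝ (E → ℝ) (V → ℝ)))) (v, ht) :=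
    ((dotCLM V).hasFDerivAt).comp _ hHb
  have hC : HasFDerivAt
      (fun p : (E → ℝ) × (V → ℝ) => (Hb₂ *ᵥ p.2) ⬝ᵥ T (p.1 - R) (H₁ *ᵥ (p.1 - R)))
      ((dotCLM V (Hb₂ *ᵥ ht)).comp
          ((bilinCLM T (v - R)).comp (ME.comp (ContinuousLinearMap.fst ℝ (E → ℝ) (V → ℝ)))
            + ((bilinCLM T).comp (ContinuousLinearMap.fst ℝ (E → ℝ) (V → ℝ))).flip
                (H₁ *ᵥ (v - R)))
        + ((dotCLM V).comp (MV.comp (ContinuousLinearMap.snd ℝ (E → ℝ) (V → ℝ)))).flip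
            (T (v - R) (H₁ *ᵥ (v - R)))) (v, ht) := hdc3.clm_apply hTu
  have total := ((hA.const_mul (g / 2)).add (hB.const_mul g)).add (hC.const_mul (1 / 2))
  convert total using 1 <;> try with_reducible_and_instances rfl
  refine ContinuousLinearMap.ext fun δ => ?_
  simp only [MV, ME, ContinuousLinearMap.add_apply, ContinuousLinearMap.smul_apply,
    ContinuousLinearMap.comp_apply, ContinuousLinearMap.flip_apply,
    ContinuousLinearMap.coe_fst', ContinuousLinearMap.coe_snd',
    dotCLM_apply, bilinCLM_apply, smul_eq_mul,
    LinearMap.coe_toContinuousLinearMap', Matrix.mulVecLin_apply,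
    dotPairCLM, LinearMap.coe_mk, AddHom.coe_mk]
  simp only [dotProduct_add, dotProduct_smul, Matrix.mulVec_add, smul_eq_mul]
  rw [dot_mulVec_symm Hb₂ hHb₂ ht δ.2,
      dotProduct_comm (Hb₂ *ᵥ δ.2), dot_mulVec_symm Hb₂ hHb₂,
      hT₂ (Hb₂ *ᵥ ht) (v - R) (H₁ *ᵥ δ.1), hT₁ (Hb₂ *ᵥ ht) δ.1 (H₁ *ᵥ (v - R)),
      dotProduct_comm (H₁ *ᵥ δ.1), dot_mulVec_symm H₁ hH₁,
      dot_mulVec_symm Hb₂ hHb₂ δ.2 ((T (v - R)) (H₁ *ᵥ (v - R)))]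
  ring
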